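/- Let $X$ be a separable Banach space, $p \in [1,\infty)$, and $f(\mu) := g(\mu(\psi_1),\dots,\mu(\psi_n))$ a cylindrical function on $\mathscr{P}_p$, where $g \in C_b^1(\mathbb{R}^n)$ and each $\psi_i \in \mathscr{F}C_b^1(X)$ is a bounded $C^1$ cylindrical function on $X$ with bounded continuous Fréchet derivative $\nabla\psi_i : X \to X^*$. Then $f$ is intrinsically differentiable on $\mathscr{P}_p$ with intrinsic derivative $Df(\mu)(x) = \sum_{i=1}^n (\partial_i g)(\mu(\psi_1),\dots,\mu(\psi_n)) \, \nabla\psi_i(x)$, i.e., for every $\phi \in L^p(X \to X, \mu)$, $\lim_{\varepsilon\to 0}\varepsilon^{-1}\big(f(\mu\circ(\mathrm{id}+\varepsilon\phi)^{-1}) - f(\mu)\big) = \int_X \langle Df(\mu)(x), \phi(x)\rangle \, d\mu(x)$. -/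

import Mathlib

open MeasureTheory Filter Metric

private lemma clm_pi_decomp {k : ℕ} (L : (Fin k → ℝ) →L[ℝ] ℝ) (v : Fin k → ℝ) :
    L v = ∑ j, v j * L (Pi.single j 1) := by
  have hv : v = ∑ j, v j • (Pi.single j (1:ℝ) : Fin k → ℝ) := by
    simp_rw [← Pi.single_smul, smul_eq_mul, mul_one, Finset.univ_sum_single]
  conv_lhs => rw [hv]
  simp [smul_eq_mul]

/-- Cylindrical functions `f(μ) = g(μ(ψ₁),…,μ(ψₙ))` on the `p`-Wasserstein space are
intrinsically differentiable, with intrinsic derivative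
`Df(μ)(x) = ∑ᵢ ∂ᵢg(μ(ψ₁),…,μ(ψₙ)) ∇ψᵢ(x)`. -/
theorem stmt13 {X : Type*} [NormedAddCommGroup X] [NormedSpace ℝ X]
    [MeasurableSpace X] [BorelSpace X] [SecondCountableTopology X] [CompleteSpace X]
    (p : ℝ) (hp : 1 ≤ p)
    -- the outer function g ∈ C_b^1(ℝⁿ)
    (n : ℕ) (g : (Fin n → ℝ) → ℝ) (hg : ContDiff ℝ 1 g)
    (hgb : ∃ C : ℝ, ∀ y, |g y| ≤ C ∧ ‖fderiv ℝ g y‖ ≤ C)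
    -- data for the cylindrical functions ψᵢ ∈ 𝓕C_b^1(X)
    (m : Fin n → ℕ) (x' : (i : Fin n) → Fin (m i) → (X →L[ℝ] ℝ))
    (G : (i : Fin n) → (Fin (m i) → ℝ) → ℝ) (hG : ∀ i, ContDiff ℝ 1 (G i))
    (hGb : ∀ i, ∃ C : ℝ, ∀ y, |G i y| ≤ C ∧ ‖fderiv ℝ (G i) y‖ ≤ C)
    (ψ : Fin n → X → ℝ) (hψ : ∀ i x, ψ i x = G i (fun j => x' i j x))
    -- the Fréchet derivatives ∇ψᵢ : X → X*
    (Dψ : Fin n → X → (X →L[ℝ] ℝ))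
    (hDψ : ∀ i x, Dψ i x =
      ∑ j, (fderiv ℝ (G i) (fun j => x' i j x) (Pi.single j 1)) • x' i j)
    -- the cylindrical function f on measures and its intrinsic derivative Df
    (f : Measure X → ℝ) (hf : ∀ μ : Measure X, f μ = g (fun i => ∫ x, ψ i x ∂μ))
    (Df : Measure X → X → (X →L[ℝ] ℝ))
    (hDf : ∀ (μ : Measure X) (x : X), Df μ x =
      ∑ i, (fderiv ℝ g (fun i => ∫ y, ψ i y ∂μ) (Pi.single i 1)) • Dψ i x)
    -- a point μ ∈ 𝒫_p and a tangent vector φ ∈ L^p(X → X, μ)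
    (μ : Measure X) (hμ : IsProbabilityMeasure μ)
    (hμp : Integrable (fun x => ‖x‖ ^ p) μ)
    (φ : X → X) (hφm : Measurable φ) (hφp : Integrable (fun x => ‖φ x‖ ^ p) μ) :
    Tendsto (fun ε : ℝ => ε⁻¹ * (f (μ.map (fun x => x + ε • φ x)) - f μ))
      (nhdsWithin 0 {0}ᶜ) (nhds (∫ x, Df μ x (φ x) ∂μ)) := by
  classical
  choose CG hCG using hGb
  set L : (i : Fin n) → X →L[ℝ] (Fin (m i) → ℝ) := fun i => ContinuousLinearMap.pi (x' i)
    with hLdef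
  have hψeq : ∀ i, ψ i = fun x => G i (L i x) := fun i => funext fun x => hψ i x
  have hψcont : ∀ i, Continuous (ψ i) := fun i => by
    rw [hψeq]; exact (hG i).continuous.comp (L i).continuous
  -- the form of the derivative
  have hDψform : ∀ i x, Dψ i x = (fderiv ℝ (G i) (fun j => x' i j x)).comp (L i) := by
    intro i x
    ext v
    rw [hDψ]
    have hd := clm_pi_decomp (fderiv ℝ (G i) (fun j => x' i j x)) (L i v)
    simp only [ContinuousLinearMap.coe_comp', Function.comp_apply,
      ContinuousLinearMap.sum_apply, ContinuousLinearMap.smul_apply, smul_eq_mul]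
    rw [hd]
    exact Finset.sum_congr rfl fun j _ => mul_comm _ _
  have hψfd : ∀ i x, HasFDerivAt (ψ i) (Dψ i x) x := by
    intro i x
    have h1 : HasFDerivAt (fun y => G i (L i y))
        ((fderiv ℝ (G i) (L i x)).comp (L i)) x :=
      ((hG i).differentiable one_ne_zero (L i x)).hasFDerivAt.comp x (L i).hasFDerivAt
    rw [hψeq, hDψform]
    exact h1
  -- uniform bound on the derivatives
  have hDψb : ∀ i x, ‖Dψ i x‖ ≤ CG i * ∑ j, ‖x' i j‖ := by
    intro i x
    rw [hDψ]
    refine le_trans (norm_sum_le _ _) ?_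
    rw [Finset.mul_sum]
    refine Finset.sum_le_sum fun j _ => ?_
    have hn := norm_smul (fderiv ℝ (G i) (fun j => x' i j x) (Pi.single j 1)) (x' i j)
    rw [hn, Real.norm_eq_abs, ← Real.norm_eq_abs]
    have hc : ‖fderiv ℝ (G i) (fun j => x' i j x) (Pi.single j 1)‖ ≤ CG i := by
      refine le_trans (ContinuousLinearMap.le_opNorm _ _) ?_
      rw [Pi.norm_single, norm_one, mul_one]
      exact (hCG i _).2
    exact mul_le_mul_of_nonneg_right hc (norm_nonneg _)
  set M : Fin n → ℝ := fun i => CG i * ∑ j, ‖x' i j‖ with hMdef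
  -- integrability of ‖φ‖
  have hφ1 : Integrable (fun x => ‖φ x‖) μ := by
    refine Integrable.mono' ((integrable_const (1:ℝ)).add hφp)
      hφm.norm.aestronglyMeasurable ?_
    filter_upwards with x
    rw [norm_norm]
    rcases le_total (‖φ x‖) 1 with h | h
    · exact le_add_of_le_of_nonneg h (Real.rpow_nonneg (norm_nonneg _) p)
    · calc ‖φ x‖ = ‖φ x‖ ^ (1:ℝ) := (Real.rpow_one _).symm
        _ ≤ ‖φ x‖ ^ p := Real.rpow_le_rpow_of_exponent_le h hp
        _ ≤ (fun x => (1:ℝ)) x + ‖φ x‖ ^ p := le_add_of_nonneg_left zero_le_one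
  have hTm : ∀ ε : ℝ, Measurable (fun x : X => x + ε • φ x) := fun ε =>
    measurable_id.add (hφm.const_smul ε)
  -- continuity of the coefficients
  have hccont : ∀ i (j : Fin (m i)),
      Continuous fun y : X => fderiv ℝ (G i) (L i y) (Pi.single j 1) :=
    fun i j => (((hG i).continuous_fderiv one_ne_zero).comp (L i).continuous).clm_apply
      continuous_const
  -- the derivative under the integral, for each i
  have key : ∀ i, Integrable (fun x => Dψ i (x + (0:ℝ) • φ x) (φ x)) μ ∧
      HasDerivAt (fun ε : ℝ => ∫ x, ψ i (x + ε • φ x) ∂μ)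
        (∫ x, Dψ i (x + (0:ℝ) • φ x) (φ x) ∂μ) 0 := by
    intro i
    have hF_meas : ∀ᶠ ε in nhds (0:ℝ),
        AEStronglyMeasurable (fun x => ψ i (x + ε • φ x)) μ := by
      filter_upwards with ε
      exact ((hψcont i).measurable.comp (hTm ε)).aestronglyMeasurable
    have hF_int : Integrable (fun x => ψ i (x + (0:ℝ) • φ x)) μ := by
      refine Integrable.mono' (integrable_const (CG i))
        (((hψcont i).measurable.comp (hTm 0)).aestronglyMeasurable) ?_
      filter_upwards with x
      rw [Real.norm_eq_abs, hψ i]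
      exact (hCG i _).1
    have hF'_meas : AEStronglyMeasurable (fun x => Dψ i (x + (0:ℝ) • φ x) (φ x)) μ := by
      apply Measurable.aestronglyMeasurable
      have hform : (fun x => Dψ i (x + (0:ℝ) • φ x) (φ x)) = fun x =>
          ∑ j, (fderiv ℝ (G i) (L i (x + (0:ℝ) • φ x)) (Pi.single j 1)) * x' i j (φ x) := by
        funext x
        rw [hDψ]
        simp only [ContinuousLinearMap.sum_apply, ContinuousLinearMap.smul_apply, smul_eq_mul]
        rfl
      rw [hform]
      exact Finset.measurable_sum _ fun j _ =>
        (((hccont i j).measurable).comp (hTm 0)).mul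
          ((x' i j).continuous.measurable.comp hφm)
    have h_bound : ∀ᵐ a ∂μ, ∀ ε ∈ ball (0:ℝ) 1,
        ‖Dψ i (a + ε • φ a) (φ a)‖ ≤ M i * ‖φ a‖ := by
      filter_upwards with a
      intro ε _
      calc ‖Dψ i (a + ε • φ a) (φ a)‖ ≤ ‖Dψ i (a + ε • φ a)‖ * ‖φ a‖ :=
            ContinuousLinearMap.le_opNorm _ _
        _ ≤ M i * ‖φ a‖ := mul_le_mul_of_nonneg_right (hDψb i _) (norm_nonneg _)
    have h_diff : ∀ᵐ a ∂μ, ∀ ε ∈ ball (0:ℝ) 1,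
        HasDerivAt (fun ε : ℝ => ψ i (a + ε • φ a)) (Dψ i (a + ε • φ a) (φ a)) ε := by
      filter_upwards with a
      intro ε _
      have h1 : HasDerivAt (fun ε : ℝ => a + ε • φ a) (φ a) ε := by
        simpa using ((hasDerivAt_id ε).smul_const (φ a)).const_add a
      exact (hψfd i (a + ε • φ a)).comp_hasDerivAt ε h1
    exact hasDerivAt_integral_of_dominated_loc_of_deriv_le (ball_mem_nhds 0 zero_lt_one) hF_meas hF_int
      hF'_meas h_bound (hφ1.const_mul (M i)) h_diff
  have hvint : ∀ i, Integrable (fun x => Dψ i x (φ x)) μ := by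
    intro i
    have := (key i).1
    simpa using this
  set v : Fin n → ℝ := fun i => ∫ x, Dψ i x (φ x) ∂μ with hvdef
  have hderiv_i : ∀ i, HasDerivAt (fun ε : ℝ => ∫ x, ψ i (x + ε • φ x) ∂μ) (v i) 0 := by
    intro i
    have := (key i).2
    simpa using this
  have hF : HasDerivAt (fun ε : ℝ => fun i => ∫ x, ψ i (x + ε • φ x) ∂μ) v 0 :=
    hasDerivAt_pi.2 hderiv_i
  set h : ℝ → ℝ := fun ε => g (fun i => ∫ x, ψ i (x + ε • φ x) ∂μ) with hhdef
  have hpt : (fun i => ∫ x, ψ i (x + (0:ℝ) • φ x) ∂μ) = fun i => ∫ y, ψ i y ∂μ := by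
    funext i; simp
  have hcomp : HasDerivAt h (fderiv ℝ g (fun i => ∫ y, ψ i y ∂μ) v) 0 := by
    have hgd : HasFDerivAt g (fderiv ℝ g (fun i => ∫ y, ψ i y ∂μ))
        ((fun ε : ℝ => fun i => ∫ x, ψ i (x + ε • φ x) ∂μ) 0) := by
      show HasFDerivAt g _ (fun i => ∫ x, ψ i (x + (0:ℝ) • φ x) ∂μ)
      rw [hpt]
      exact (hg.differentiable one_ne_zero _).hasFDerivAt
    exact hgd.comp_hasDerivAt 0 hF
  have hval : ∫ x, Df μ x (φ x) ∂μ = fderiv ℝ g (fun i => ∫ y, ψ i y ∂μ) v := by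
    have h1 : (fun x => Df μ x (φ x)) = fun x =>
        ∑ i, (fderiv ℝ g (fun i => ∫ y, ψ i y ∂μ) (Pi.single i 1)) * Dψ i x (φ x) := by
      funext x
      rw [hDf]
      simp only [ContinuousLinearMap.sum_apply, ContinuousLinearMap.smul_apply, smul_eq_mul]
    rw [h1, integral_finset_sum _ fun i _ => (hvint i).const_mul _,
      clm_pi_decomp (fderiv ℝ g (fun i => ∫ y, ψ i y ∂μ)) v]
    refine Finset.sum_congr rfl fun i _ => ?_
    rw [integral_const_mul, mul_comm]
  rw [hasDerivAt_iff_tendsto_slope] at hcomp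
  have hfun : (fun ε : ℝ => ε⁻¹ * (f (μ.map (fun x => x + ε • φ x)) - f μ)) = slope h 0 := by
    funext ε
    have hmap : f (μ.map (fun x => x + ε • φ x)) = h ε := by
      rw [hf, hhdef]
      congr 1
      funext i
      exact integral_map (hTm ε).aemeasurable (hψcont i).aestronglyMeasurable
    have hμ0 : f μ = h 0 := by
      rw [hf, hhdef]
      congr 1
      funext i
      simp
    rw [hmap, hμ0]
    simp [slope, sub_zero, smul_eq_mul]
  rw [hfun, hval]
  exact hcomp
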